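/- Let H be a complex Hilbert space, let A be a bounded self-adjoint linear operator on H that is bijective with bounded inverse, and let U be a bounded self-adjoint linear operator on H. Then the map f ↦ U f is a linear bijection from ker(A − U²) onto ker(I − U A^{−1} U), with inverse given by g ↦ A^{−1} U g. In particular ker(A − U²) ≠ {0} if and only if 1 is an eigenvalue of the operator K = U A^{−1} U, and the corresponding eigenspaces have equal dimension. -/

import Mathlib

open MeasureTheory

noncomputable section

/-- **Abstract Birman–Schwinger correspondence.**
Let `A` be a bounded self-adjoint operator on a complex Hilbert space which is
bijective with bounded inverse `Ainv`, and let `U` be a bounded self-adjoint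
operator.  Then `f ↦ U f` is a linear bijection from `ker (A − U²)` onto
`ker (I − U A⁻¹ U)` with inverse `g ↦ A⁻¹ (U g)`.  In particular
`ker (A − U²) ≠ ⊥` iff `1` is an eigenvalue of `K = U A⁻¹ U`, and the two
eigenspaces have equal dimension (they are linearly equivalent). -/
theorem birman_schwinger_correspondence
    {H : Type*} [NormedAddCommGroup H] [InnerProductSpace ℂ H] [CompleteSpace H]
    (A U Ainv : H →L[ℂ] H) (hA : IsSelfAdjoint A) (hU : IsSelfAdjoint U)
    (hA1 : A.comp Ainv = ContinuousLinearMap.id ℂ H)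
    (hA2 : Ainv.comp A = ContinuousLinearMap.id ℂ H) :
    (∀ f ∈ LinearMap.ker ((A - U.comp U : H →L[ℂ] H) : H →ₗ[ℂ] H),
        U f ∈ LinearMap.ker (((1 : H →L[ℂ] H) - U.comp (Ainv.comp U) : H →L[ℂ] H) : H →ₗ[ℂ] H)) ∧
    (∀ g ∈ LinearMap.ker (((1 : H →L[ℂ] H) - U.comp (Ainv.comp U) : H →L[ℂ] H) : H →ₗ[ℂ] H),
        Ainv (U g) ∈ LinearMap.ker ((A - U.comp U : H →L[ℂ] H) : H →ₗ[ℂ] H)) ∧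
    (∀ f ∈ LinearMap.ker ((A - U.comp U : H →L[ℂ] H) : H →ₗ[ℂ] H), Ainv (U (U f)) = f) ∧
    (∀ g ∈ LinearMap.ker (((1 : H →L[ℂ] H) - U.comp (Ainv.comp U) : H →L[ℂ] H) : H →ₗ[ℂ] H),
        U (Ainv (U g)) = g) ∧
    (LinearMap.ker ((A - U.comp U : H →L[ℂ] H) : H →ₗ[ℂ] H) ≠ ⊥ ↔
        LinearMap.ker (((1 : H →L[ℂ] H) - U.comp (Ainv.comp U) : H →L[ℂ] H) : H →ₗ[ℂ] H) ≠ ⊥) ∧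
    (∃ eqv : LinearMap.ker ((A - U.comp U : H →L[ℂ] H) : H →ₗ[ℂ] H) ≃ₗ[ℂ]
        LinearMap.ker (((1 : H →L[ℂ] H) - U.comp (Ainv.comp U) : H →L[ℂ] H) : H →ₗ[ℂ] H),
      ∀ f : LinearMap.ker ((A - U.comp U : H →L[ℂ] H) : H →ₗ[ℂ] H), (eqv f : H) = U f) := by
  have hAi : ∀ x, Ainv (A x) = x := fun x => by
    have := DFunLike.congr_fun hA2 x; simpa using this
  have hAi' : ∀ x, A (Ainv x) = x := fun x => by
    have := DFunLike.congr_fun hA1 x; simpa using this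
  have mem1 : ∀ f, f ∈ LinearMap.ker ((A - U.comp U : H →L[ℂ] H) : H →ₗ[ℂ] H) ↔ A f = U (U f) := fun f => by
    simp [LinearMap.mem_ker, sub_eq_zero]
  have mem2 : ∀ g, g ∈ LinearMap.ker (((1 : H →L[ℂ] H) - U.comp (Ainv.comp U) : H →L[ℂ] H) : H →ₗ[ℂ] H) ↔
      U (Ainv (U g)) = g := fun g => by
    simp only [LinearMap.mem_ker, ContinuousLinearMap.coe_coe, ContinuousLinearMap.coe_sub', Pi.sub_apply,
      ContinuousLinearMap.one_apply, ContinuousLinearMap.coe_comp', Function.comp_apply,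
      sub_eq_zero]
    exact eq_comm
  have fwd : ∀ f ∈ LinearMap.ker ((A - U.comp U : H →L[ℂ] H) : H →ₗ[ℂ] H),
      U f ∈ LinearMap.ker (((1 : H →L[ℂ] H) - U.comp (Ainv.comp U) : H →L[ℂ] H) : H →ₗ[ℂ] H) := by
    intro f hf
    rw [mem2]
    rw [mem1] at hf
    rw [← hf, hAi]
  have bwd : ∀ g ∈ LinearMap.ker (((1 : H →L[ℂ] H) - U.comp (Ainv.comp U) : H →L[ℂ] H) : H →ₗ[ℂ] H),
      Ainv (U g) ∈ LinearMap.ker ((A - U.comp U : H →L[ℂ] H) : H →ₗ[ℂ] H) := by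
    intro g hg
    rw [mem1]
    rw [mem2] at hg
    rw [hg, hAi']
  have inv1 : ∀ f ∈ LinearMap.ker ((A - U.comp U : H →L[ℂ] H) : H →ₗ[ℂ] H), Ainv (U (U f)) = f := by
    intro f hf
    rw [mem1] at hf
    rw [← hf, hAi]
  have inv2 : ∀ g ∈ LinearMap.ker (((1 : H →L[ℂ] H) - U.comp (Ainv.comp U) : H →L[ℂ] H) : H →ₗ[ℂ] H),
      U (Ainv (U g)) = g := fun g hg => (mem2 g).mp hg
  have hiff : LinearMap.ker ((A - U.comp U : H →L[ℂ] H) : H →ₗ[ℂ] H) = ⊥ ↔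
      LinearMap.ker (((1 : H →L[ℂ] H) - U.comp (Ainv.comp U) : H →L[ℂ] H) : H →ₗ[ℂ] H) = ⊥ := by
    constructor
    · intro h
      rw [Submodule.eq_bot_iff] at h ⊢
      intro g hg
      have h0 : Ainv (U g) = 0 := h _ (bwd g hg)
      have := inv2 g hg
      rw [h0, map_zero] at this
      exact this.symm
    · intro h
      rw [Submodule.eq_bot_iff] at h ⊢
      intro f hf
      have h0 : U f = 0 := h _ (fwd f hf)
      have := inv1 f hf
      rw [h0, map_zero, map_zero] at this
      exact this.symm
  refine ⟨fwd, bwd, inv1, inv2, not_congr hiff, ?_⟩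
  refine ⟨{ toFun := fun f => ⟨U f, fwd f f.2⟩
            invFun := fun g => ⟨Ainv (U g), bwd g g.2⟩
            map_add' := fun x y => by ext; exact map_add U (x : H) (y : H)
            map_smul' := fun c x => by ext; exact map_smul U c (x : H)
            left_inv := fun f => Subtype.ext (inv1 f f.2)
            right_inv := fun g => Subtype.ext (inv2 g g.2) }, fun f => rfl⟩

end
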